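/- arXiv:1808.02566 — 2 statements merged into one kernel-verified Lean document; each statement's English description precedes it below -/
import Mathlib

section
/- Let K, L : Ω × Ω → ℂ be reproducing kernels for H²(Ω). Then for every W ∈ H²(Ω) and every ζ ∈ Ω, W(ζ) = ∫_Ω ( K(z,ζ)·Re W(z) + L(z,ζ)·Im W(z) ) dA(z). -/
open MeasureTheory Complex Filter Topology

/-- The Vekua integral operator `(T_Ω φ)(z) = (1/π) ∫_Ω φ(ζ)/(z − ζ) dA(ζ)`. -/
noncomputable def Tom (Ω : Set ℂ) (φ : ℂ → ℂ) (z : ℂ) : ℂ :=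
  (1 / (Real.pi : ℂ)) * ∫ ζ in Ω, φ ζ / (z - ζ)

/-- The Wirtinger derivative `∂z̄ W (z) = (1/2)(∂ₓW(z) + i ∂ᵧW(z))`, where the
partial derivatives are the real Fréchet derivative applied to `1` and `i`. -/
noncomputable def dzbar (W : ℂ → ℂ) (z : ℂ) : ℂ :=
  (1 / 2 : ℂ) * (fderiv ℝ W z 1 + Complex.I * fderiv ℝ W z Complex.I)

/-- `f` is Hölder continuous with exponent `α` on every compact subset of `S`. -/
def HolderOnCompactsOf (f : ℂ → ℂ) (α : ℝ) (S : Set ℂ) : Prop :=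
  ∀ K : Set ℂ, K ⊆ S → IsCompact K →
    ∃ C > 0, ∀ z₁ ∈ K, ∀ z₂ ∈ K,
      ‖f z₁ - f z₂‖ ≤ C * ‖z₁ - z₂‖ ^ α

/-- `W` is a classical solution of the Vekua equation `∂z̄ W = a W + b conj W`
on `Ω`: it is continuously real-differentiable on `Ω` and satisfies the
equation there. -/
def VekuaSol (a b : ℂ → ℂ) (Ω : Set ℂ) (W : ℂ → ℂ) : Prop :=
  ContDiffOn ℝ 1 W Ω ∧
    ∀ z ∈ Ω, dzbar W z = a z * W z + b z * (starRingEnd ℂ) (W z)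

/-- Membership in the Bergman space `H²(Ω)` of the Vekua equation: a classical
solution on `Ω` which is square integrable over `Ω`. -/
def MemH2 (a b : ℂ → ℂ) (Ω : Set ℂ) (W : ℂ → ℂ) : Prop :=
  VekuaSol a b Ω W ∧ IntegrableOn (fun z => ‖W z‖ ^ 2) Ω

/-- `K, L : ℂ → ℂ → ℂ` are reproducing kernels for `H²(Ω)`: for each `ζ ∈ Ω`
the functions `K ζ ·` and `L ζ ·` belong to `H²(Ω)`, and they represent the
real and imaginary parts of the point evaluations. -/
def IsReproducingKernels (a b : ℂ → ℂ) (Ω : Set ℂ) (K L : ℂ → ℂ → ℂ) : Prop :=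
  (∀ ζ ∈ Ω, MemH2 a b Ω (K ζ) ∧ MemH2 a b Ω (L ζ)) ∧
    ∀ W : ℂ → ℂ, MemH2 a b Ω W → ∀ ζ ∈ Ω,
      (W ζ).re = (∫ z in Ω, W z * (starRingEnd ℂ) (K ζ z)).re ∧
      (W ζ).im = (∫ z in Ω, W z * (starRingEnd ℂ) (L ζ z)).re

-- symmetry of the real inner product
lemma symm_re (Ω : Set ℂ) (U V : ℂ → ℂ) :
    (∫ z in Ω, U z * (starRingEnd ℂ) (V z)).re
      = (∫ z in Ω, V z * (starRingEnd ℂ) (U z)).re := by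
  have h : ∫ z in Ω, V z * (starRingEnd ℂ) (U z)
      = (starRingEnd ℂ) (∫ z in Ω, U z * (starRingEnd ℂ) (V z)) := by
    rw [← integral_conj]
    congr 1; ext z
    simp [map_mul, mul_comm]
  rw [h, Complex.conj_re]

lemma prod_int (Ω : Set ℂ) (hop : IsOpen Ω) (U V : ℂ → ℂ)
    (hUc : ContinuousOn U Ω) (hVc : ContinuousOn V Ω)
    (hU : IntegrableOn (fun z => ‖U z‖ ^ 2) Ω)
    (hV : IntegrableOn (fun z => ‖V z‖ ^ 2) Ω) :
    IntegrableOn (fun z => U z * (starRingEnd ℂ) (V z)) Ω := by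
  have hmeas : AEStronglyMeasurable (fun z => U z * (starRingEnd ℂ) (V z))
      (volume.restrict Ω) := by
    exact ((hUc.mul (Complex.continuous_conj.comp_continuousOn hVc)).aestronglyMeasurable
      hop.measurableSet)
  refine Integrable.mono' (((hU.add hV).div_const 2)) hmeas (Filter.Eventually.of_forall ?_)
  intro z
  have h2 : 2 * ‖U z‖ * ‖V z‖
      ≤ ‖U z‖ ^ 2 + ‖V z‖ ^ 2 := two_mul_le_add_sq _ _
  have : ‖U z * (starRingEnd ℂ) (V z)‖ = ‖U z‖ * ‖V z‖ := by
    simp [map_mul]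
  rw [this]
  simp only [Pi.add_apply]
  linarith


/-- Reproducing formula: for `W ∈ H²(Ω)` and `ζ ∈ Ω`,
`W(ζ) = ∫_Ω (K(z,ζ) Re W(z) + L(z,ζ) Im W(z)) dA(z)`. -/
theorem kernel_reproducing (Ω : Set ℂ) (hne : Ω.Nonempty) (hop : IsOpen Ω)
    (hconn : IsConnected Ω) (hbd : Bornology.IsBounded Ω)
    (α : ℝ) (hα0 : 0 < α) (hα1 : α < 1)
    (a b : ℂ → ℂ)
    (hab : ∃ M : ℝ, ∀ z ∈ Ω, ‖a z‖ ≤ M ∧ ‖b z‖ ≤ M)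
    (haH : HolderOnCompactsOf a α Ω) (hbH : HolderOnCompactsOf b α Ω)
    (K L : ℂ → ℂ → ℂ) (hKL : IsReproducingKernels a b Ω K L) :
    ∀ W : ℂ → ℂ, MemH2 a b Ω W → ∀ ζ ∈ Ω,
      W ζ = ∫ z in Ω, (K z ζ * ((W z).re : ℂ) + L z ζ * ((W z).im : ℂ)) := by
  intro W hW ζ hζ
  have hWc : ContinuousOn W Ω := hW.1.1.continuousOn
  have hKζ := (hKL.1 ζ hζ).1
  have hLζ := (hKL.1 ζ hζ).2
  have hKζc : ContinuousOn (K ζ) Ω := hKζ.1.1.continuousOn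
  have hLζc : ContinuousOn (L ζ) Ω := hLζ.1.1.continuousOn
  set f₁ : ℂ → ℝ := fun z => (W z * (starRingEnd ℂ) (K ζ z)).re with hf₁def
  set f₂ : ℂ → ℝ := fun z => (W z * (starRingEnd ℂ) (L ζ z)).re with hf₂def
  have hKint : IntegrableOn (fun z => W z * (starRingEnd ℂ) (K ζ z)) Ω :=
    prod_int Ω hop W (K ζ) hWc hKζc hW.2 hKζ.2
  have hLint : IntegrableOn (fun z => W z * (starRingEnd ℂ) (L ζ z)) Ω :=
    prod_int Ω hop W (L ζ) hWc hLζc hW.2 hLζ.2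
  have key : Set.EqOn (fun z => K z ζ * ((W z).re : ℂ) + L z ζ * ((W z).im : ℂ))
      (fun z => ((f₁ z : ℝ) : ℂ) + Complex.I * ((f₂ z : ℝ) : ℂ)) Ω := by
    intro z hz
    have hz₁ := hKL.2 (K z) (hKL.1 z hz).1 ζ hζ
    have hz₂ := hKL.2 (K ζ) (hKL.1 ζ hζ).1 z hz
    have hz₃ := hKL.2 (L z) (hKL.1 z hz).2 ζ hζ
    have hz₄ := hKL.2 (L ζ) (hKL.1 ζ hζ).2 z hz
    have hKre : (K z ζ).re = (K ζ z).re := by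
      rw [hz₁.1, hz₂.1, symm_re]
    have hKim : (K z ζ).im = (L ζ z).re := by
      rw [hz₁.2, hz₄.1, symm_re]
    have hLre : (L z ζ).re = (K ζ z).im := by
      rw [hz₃.1, hz₂.2, symm_re]
    have hLim : (L z ζ).im = (L ζ z).im := by
      rw [hz₃.2, hz₄.2, symm_re]
    apply Complex.ext <;>
      simp [f₁, f₂, Complex.mul_re, Complex.mul_im, Complex.conj_re, Complex.conj_im,
        hKre, hKim, hLre, hLim] <;> ring
  have hf₁int : IntegrableOn (fun z => ((f₁ z : ℝ) : ℂ)) Ω := hKint.re.ofReal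
  have hf₂int : IntegrableOn (fun z => ((f₂ z : ℝ) : ℂ)) Ω := hLint.re.ofReal
  rw [setIntegral_congr_fun hop.measurableSet key]
  have hsplit : ∫ z in Ω, (((f₁ z : ℝ) : ℂ) + Complex.I * ((f₂ z : ℝ) : ℂ))
      = (∫ z in Ω, ((f₁ z : ℝ) : ℂ)) + Complex.I * ∫ z in Ω, ((f₂ z : ℝ) : ℂ) := by
    rw [integral_add hf₁int (hf₂int.const_mul Complex.I), integral_const_mul]
  have hofr1 : ∫ z in Ω, ((f₁ z : ℝ) : ℂ) = ((∫ z in Ω, f₁ z : ℝ) : ℂ) := integral_ofReal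
  have hofr2 : ∫ z in Ω, ((f₂ z : ℝ) : ℂ) = ((∫ z in Ω, f₂ z : ℝ) : ℂ) := integral_ofReal
  rw [hsplit, hofr1, hofr2]
  have h1 : ∫ z in Ω, f₁ z = (∫ z in Ω, W z * (starRingEnd ℂ) (K ζ z)).re := by
    exact integral_re hKint
  have h2 : ∫ z in Ω, f₂ z = (∫ z in Ω, W z * (starRingEnd ℂ) (L ζ z)).re := by
    exact integral_re hLint
  rw [h1, h2, ← (hKL.2 W hW ζ hζ).1, ← (hKL.2 W hW ζ hζ).2]
  apply Complex.ext <;> simp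
end

section
/- H²(Ω) has a countable complete subset: there exists a sequence (Vₙ)_{n∈ℕ} of elements of H²(Ω) such that the set of finite real linear combinations of the Vₙ is dense in H²(Ω) with respect to the L²(Ω) norm, i.e., for every W ∈ H²(Ω) and ε > 0 there exist finitely many real coefficients c₁,…,c_N with ∫_Ω |W(z) − Σ_{n=1}^N cₙ Vₙ(z)|² dA(z) < ε². -/
open MeasureTheory Complex Filter Topology

private lemma memH2_zero (a b : ℂ → ℂ) (Ω : Set ℂ) : MemH2 a b Ω (fun _ => 0) := by
  refine ⟨⟨contDiffOn_const, fun z hz => by simp [dzbar]⟩, ?_⟩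
  simpa using (integrableOn_zero (E := ℝ) (μ := volume) (s := Ω))

private lemma memH2_memLp {a b : ℂ → ℂ} {Ω : Set ℂ} (hop : IsOpen Ω) {W : ℂ → ℂ}
    (hW : MemH2 a b Ω W) : MemLp W 2 (volume.restrict Ω) := by
  have hmeas : AEStronglyMeasurable W (volume.restrict Ω) :=
    (hW.1.1.continuousOn).aestronglyMeasurable hop.measurableSet
  rw [memLp_two_iff_integrable_sq_norm hmeas]
  exact hW.2

/-- `H²(Ω)` has a countable complete subset: a sequence of elements of `H²(Ω)`
whose finite real linear combinations are dense in `H²(Ω)` with respect to the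
`L²(Ω)` norm. -/
theorem H2_countable_complete (Ω : Set ℂ) (hne : Ω.Nonempty) (hop : IsOpen Ω)
    (hconn : IsConnected Ω) (hbd : Bornology.IsBounded Ω)
    (α : ℝ) (hα0 : 0 < α) (hα1 : α < 1)
    (a b : ℂ → ℂ)
    (hab : ∃ M : ℝ, ∀ z ∈ Ω, ‖a z‖ ≤ M ∧ ‖b z‖ ≤ M)
    (haH : HolderOnCompactsOf a α Ω) (hbH : HolderOnCompactsOf b α Ω) :
    ∃ V : ℕ → ℂ → ℂ, (∀ n, MemH2 a b Ω (V n)) ∧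
      ∀ W : ℂ → ℂ, MemH2 a b Ω W → ∀ ε > (0 : ℝ),
        ∃ (N : ℕ) (c : ℕ → ℝ),
          (∫ z in Ω,
            ‖W z - ∑ n ∈ Finset.range N, (c n : ℂ) * V n z‖ ^ 2)
            < ε ^ 2 := by
  classical
  haveI : Fact ((1:ENNReal) ≤ 2) := ⟨by norm_num⟩
  haveI : Fact ((2:ENNReal) ≠ ⊤) := ⟨by norm_num⟩
  set μ := volume.restrict Ω with hμdef
  -- the image of H² in L²
  set S : Set (Lp ℂ 2 μ) :=
    {f | ∃ W : ℂ → ℂ, ∃ h : MemH2 a b Ω W, f = (memH2_memLp hop h).toLp W} with hSdef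
  have hS0 : ((memH2_memLp hop (memH2_zero a b Ω)).toLp _) ∈ S :=
    ⟨_, memH2_zero a b Ω, rfl⟩
  haveI : Nonempty S := ⟨⟨_, hS0⟩⟩
  obtain ⟨D, Dcount, Ddense⟩ := TopologicalSpace.exists_countable_dense (↥S)
  have Dne : D.Nonempty := Ddense.nonempty
  obtain ⟨g, hg⟩ := Set.Countable.exists_eq_range Dcount Dne
  -- choose representatives
  have hmem : ∀ n : ℕ, ∃ W : ℂ → ℂ, ∃ h : MemH2 a b Ω W,
      ((g n : S) : Lp ℂ 2 μ) = (memH2_memLp hop h).toLp W := fun n => (g n : S).2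
  choose V hV hVg using hmem
  refine ⟨V, hV, ?_⟩
  intro W hW ε hε
  -- the element of S corresponding to W
  have hWL : MemLp W 2 μ := memH2_memLp hop hW
  have hfS : (hWL.toLp W) ∈ S := ⟨W, hW, rfl⟩
  set x : S := ⟨hWL.toLp W, hfS⟩ with hxdef
  obtain ⟨y, hy⟩ := Metric.dense_iff.mp Ddense x ε hε
  have hyD : y ∈ D := hy.2
  have hyd : dist y x < ε := Metric.mem_ball.mp hy.1
  obtain ⟨n, rfl⟩ : ∃ n, g n = y := by rw [hg] at hyD; exact hyD
  refine ⟨n + 1, fun m => if m = n then 1 else 0, ?_⟩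
  -- simplify the sum
  have hsum : ∀ z : ℂ, (∑ m ∈ Finset.range (n+1),
      ((if m = n then (1:ℝ) else 0 : ℝ) : ℂ) * V m z) = V n z := by
    intro z
    rw [Finset.sum_eq_single n]
    · simp
    · intro m _ hmn; simp [hmn]
    · intro h; exact absurd (Finset.self_mem_range_succ n) h
  have hgoal : (∫ z in Ω, ‖W z - V n z‖ ^ 2) < ε ^ 2 := by
    have hVL : MemLp (V n) 2 μ := memH2_memLp hop (hV n)
    have hUL : MemLp (W - V n) 2 μ := hWL.sub hVL
    have hdist : dist (hWL.toLp W) (hVL.toLp (V n)) < ε := by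
      have : dist x (g n) < ε := by rw [dist_comm]; exact hyd
      rw [Subtype.dist_eq] at this
      simpa [hxdef, hVg n] using this
    have hnorm : ‖hUL.toLp (W - V n)‖ < ε := by
      rw [MemLp.toLp_sub]
      simpa [dist_eq_norm] using hdist
    have hsq : ‖hUL.toLp (W - V n)‖ ^ 2 < ε ^ 2 :=
      pow_lt_pow_left₀ hnorm (norm_nonneg _) (by norm_num)
    have hint : (∫ z, ‖(W - V n) z‖ ^ 2 ∂μ) = ‖hUL.toLp (W - V n)‖ ^ 2 := by
      rw [← real_inner_self_eq_norm_sq, MeasureTheory.L2.inner_def]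
      refine integral_congr_ae ?_
      filter_upwards [hUL.coeFn_toLp] with z hz
      rw [hz, real_inner_self_eq_norm_sq]
    calc (∫ z in Ω, ‖W z - V n z‖ ^ 2)
        = ∫ z, ‖(W - V n) z‖ ^ 2 ∂μ := by rfl
      _ = ‖hUL.toLp (W - V n)‖ ^ 2 := hint
      _ < ε ^ 2 := hsq
  calc (∫ z in Ω, ‖W z - ∑ m ∈ Finset.range (n+1),
          ((if m = n then (1:ℝ) else 0 : ℝ) : ℂ) * V m z‖ ^ 2)
      = ∫ z in Ω, ‖W z - V n z‖ ^ 2 := by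
        refine integral_congr_ae (Filter.Eventually.of_forall fun z => ?_)
        simp only [hsum z]
    _ < ε ^ 2 := hgoal
end
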